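/- Let n ≥ 3 and r > 0. The function u(x) = (2r / (|x|² − r²))^((n−2)/2), defined on the exterior region {x ∈ ℝⁿ : |x| > r}, satisfies Δu = (n(n−2)/4) · u^((n+2)/(n−2)) on that region. -/

import Mathlib

open scoped RealInnerProductSpace

noncomputable def lap {n : ℕ} (f : EuclideanSpace ℝ (Fin n) → ℝ)
    (x : EuclideanSpace ℝ (Fin n)) : ℝ :=
  ∑ i, fderiv ℝ (fun y => fderiv ℝ f y (EuclideanSpace.single i 1)) x
      (EuclideanSpace.single i 1)


theorem stmt_0 (n : ℕ) (hn : 3 ≤ n) (r : ℝ) (hr : 0 < r) :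
    ∀ x : EuclideanSpace ℝ (Fin n), r < ‖x‖ →
      lap (fun y => (2 * r / (‖y‖ ^ 2 - r ^ 2)) ^ (((n : ℝ) - 2) / 2)) x =
        (n * (n - 2) / 4 : ℝ) *
          ((2 * r / (‖x‖ ^ 2 - r ^ 2)) ^ (((n : ℝ) - 2) / 2)) ^
            (((n : ℝ) + 2) / ((n : ℝ) - 2)) := by
  intro x hx
  have hn' : (3:ℝ) ≤ (n:ℝ) := by exact_mod_cast hn
  set p : ℝ := ((n : ℝ) - 2) / 2 with hp
  have hppos : 0 < p := by rw [hp]; linarith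
  have hc : (0:ℝ) < 2 * r := by linarith
  have hsy : ∀ y : EuclideanSpace ℝ (Fin n), r < ‖y‖ → 0 < ‖y‖ ^ 2 - r ^ 2 := by
    intro y hy; nlinarith [norm_nonneg y]
  have hsx : 0 < ‖x‖ ^ 2 - r ^ 2 := hsy x hx
  -- scalar derivative of t ↦ (2r/t)^p
  have hF : ∀ t : ℝ, 0 < t → HasDerivAt (fun t : ℝ => (2 * r / t) ^ p)
      (-p * (2 * r) ^ p * t ^ (-p - 1)) t := by
    intro t ht
    have h1 : HasDerivAt (fun t : ℝ => 2 * r / t) (-(2 * r / t ^ 2)) t := by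
      simpa [div_eq_mul_inv] using (hasDerivAt_inv ht.ne').const_mul (2 * r)
    have h2 := Real.hasDerivAt_rpow_const (x := 2 * r / t) (p := p) (Or.inl (by positivity))
    have h3 := h2.comp t h1
    refine h3.congr_deriv ?_
    symm
    rw [Real.div_rpow hc.le ht.le]
    have e1 : (2 * r) ^ p = (2 * r) ^ (p - 1) * (2 * r) := by
      rw [← Real.rpow_add_one hc.ne']; norm_num
    have e2 : t ^ (-p - 1) = (t ^ (p - 1) * t ^ 2)⁻¹ := by
      rw [sq, ← mul_assoc, ← Real.rpow_add_one ht.ne', ← Real.rpow_add_one ht.ne',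
        ← Real.rpow_neg ht.le]
      congr 1; ring
    rw [e1, e2]
    field_simp
  -- scalar derivative of t ↦ A * t^e
  have hF2 : ∀ (A e t : ℝ), 0 < t → HasDerivAt (fun t : ℝ => A * t ^ e)
      (A * (e * t ^ (e - 1))) t := fun A e t ht =>
    (Real.hasDerivAt_rpow_const (Or.inl ht.ne')).const_mul A
  have hq : ∀ y : EuclideanSpace ℝ (Fin n),
      HasFDerivAt (fun y : EuclideanSpace ℝ (Fin n) => ‖y‖ ^ 2 - r ^ 2)
        (2 • innerSL ℝ y) y := fun y =>
    ((hasStrictFDerivAt_norm_sq y).hasFDerivAt).sub_const (r ^ 2)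
  have hu : ∀ y : EuclideanSpace ℝ (Fin n), r < ‖y‖ →
      HasFDerivAt (fun y : EuclideanSpace ℝ (Fin n) => (2 * r / (‖y‖ ^ 2 - r ^ 2)) ^ p)
        ((-p * (2 * r) ^ p * (‖y‖ ^ 2 - r ^ 2) ^ (-p - 1)) • (2 • innerSL ℝ y)) y :=
    fun y hy => by have := (hF _ (hsy y hy)).comp_hasFDerivAt y (hq y); exact this
  have hmem : {y : EuclideanSpace ℝ (Fin n) | r < ‖y‖} ∈ nhds x :=
    (isOpen_lt continuous_const continuous_norm).mem_nhds hx
  have hfd1 : ∀ i : Fin n,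
      (fun y : EuclideanSpace ℝ (Fin n) =>
          fderiv ℝ (fun y => (2 * r / (‖y‖ ^ 2 - r ^ 2)) ^ p) y (EuclideanSpace.single i 1))
        =ᶠ[nhds x]
      (fun y : EuclideanSpace ℝ (Fin n) =>
          (-p * (2 * r) ^ p * (‖y‖ ^ 2 - r ^ 2) ^ (-p - 1)) * (2 * y i)) := by
    intro i
    filter_upwards [hmem] with y hy
    rw [(hu y hy).fderiv]
    simp [real_inner_comm, EuclideanSpace.inner_single_right]
  have hw : HasFDerivAt
      (fun y : EuclideanSpace ℝ (Fin n) => -p * (2 * r) ^ p * (‖y‖ ^ 2 - r ^ 2) ^ (-p - 1))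
      ((-p * (2 * r) ^ p * ((-p - 1) * (‖x‖ ^ 2 - r ^ 2) ^ (-p - 1 - 1))) •
        (2 • innerSL ℝ x)) x :=
    by have := (hF2 (-p * (2 * r) ^ p) (-p - 1) _ hsx).comp_hasFDerivAt x (hq x); exact this
  have key : ∀ i : Fin n,
      fderiv ℝ (fun y : EuclideanSpace ℝ (Fin n) =>
          fderiv ℝ (fun y => (2 * r / (‖y‖ ^ 2 - r ^ 2)) ^ p) y (EuclideanSpace.single i 1)) x
        (EuclideanSpace.single i 1)
      = (-p * (2 * r) ^ p * (‖x‖ ^ 2 - r ^ 2) ^ (-p - 1)) * 2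
        + (-p * (2 * r) ^ p * ((-p - 1) * (‖x‖ ^ 2 - r ^ 2) ^ (-p - 1 - 1))) *
            (2 * x i) * (2 * x i) := by
    intro i
    rw [(hfd1 i).fderiv_eq]
    have hproj : HasFDerivAt (fun y : EuclideanSpace ℝ (Fin n) => 2 * y i)
        ((2:ℝ) • (EuclideanSpace.proj i : EuclideanSpace ℝ (Fin n) →L[ℝ] ℝ)) x :=
      ((EuclideanSpace.proj i : EuclideanSpace ℝ (Fin n) →L[ℝ] ℝ)).hasFDerivAt.const_mul (2:ℝ)
    rw [(show HasFDerivAt (fun y : EuclideanSpace ℝ (Fin n) =>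
        -p * (2 * r) ^ p * (‖y‖ ^ 2 - r ^ 2) ^ (-p - 1) * (2 * y i)) _ x from hw.mul hproj).fderiv]
    simp [real_inner_comm, EuclideanSpace.inner_single_right]
    ring
  simp only [lap]
  rw [Finset.sum_congr rfl fun i _ => key i]
  have hsum : ∑ i, (x i) ^ 2 = ‖x‖ ^ 2 := by
    rw [EuclideanSpace.norm_eq, Real.sq_sqrt (by positivity)]
    simp [sq_abs]
  rw [Finset.sum_add_distrib, Finset.sum_const, Finset.card_univ, Fintype.card_fin]
  have hsum2 : ∑ i : Fin n, (-p * (2 * r) ^ p * ((-p - 1) * (‖x‖ ^ 2 - r ^ 2) ^ (-p - 1 - 1))) *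
      (2 * x i) * (2 * x i)
      = (-p * (2 * r) ^ p * ((-p - 1) * (‖x‖ ^ 2 - r ^ 2) ^ (-p - 1 - 1))) * 4 * ‖x‖ ^ 2 := by
    rw [← hsum, Finset.mul_sum]
    exact Finset.sum_congr rfl fun i _ => by ring
  rw [hsum2, nsmul_eq_mul]
  -- final algebra
  have h2rS : (0:ℝ) < 2 * r / (‖x‖ ^ 2 - r ^ 2) := by positivity
  rw [← Real.rpow_mul h2rS.le]
  have hn2 : (n:ℝ) - 2 ≠ 0 := by linarith
  have hpe : p * (((n:ℝ) + 2) / ((n:ℝ) - 2)) = p + 2 := by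
    rw [hp]; field_simp; ring
  rw [hpe, Real.div_rpow hc.le hsx.le]
  have eC : (2 * r) ^ (p + 2) = (2 * r) ^ p * (2 * r) ^ 2 := by
    rw [sq, ← mul_assoc, ← Real.rpow_add_one hc.ne', ← Real.rpow_add_one hc.ne']
    congr 1; ring
  have eK : (‖x‖ ^ 2 - r ^ 2) ^ (p + 2) = (‖x‖ ^ 2 - r ^ 2) ^ p * (‖x‖ ^ 2 - r ^ 2) ^ 2 := by
    rw [sq (‖x‖ ^ 2 - r ^ 2), ← mul_assoc, ← Real.rpow_add_one hsx.ne',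
      ← Real.rpow_add_one hsx.ne']
    congr 1; ring
  have eA : (‖x‖ ^ 2 - r ^ 2) ^ (-p - 1)
      = ((‖x‖ ^ 2 - r ^ 2) ^ p * (‖x‖ ^ 2 - r ^ 2))⁻¹ := by
    rw [← Real.rpow_add_one hsx.ne', ← Real.rpow_neg hsx.le]
    congr 1; ring
  have eB : (‖x‖ ^ 2 - r ^ 2) ^ (-p - 1 - 1)
      = ((‖x‖ ^ 2 - r ^ 2) ^ p * (‖x‖ ^ 2 - r ^ 2) ^ 2)⁻¹ := by
    rw [sq (‖x‖ ^ 2 - r ^ 2), ← mul_assoc, ← Real.rpow_add_one hsx.ne',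
      ← Real.rpow_add_one hsx.ne', ← Real.rpow_neg hsx.le]
    congr 1; ring
  rw [eC, eK, eA, eB]
  have hK : (0:ℝ) < (‖x‖ ^ 2 - r ^ 2) ^ p := Real.rpow_pos_of_pos hsx p
  rw [hp]
  field_simp
  ring
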